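/- For every n ≥ 1, if the complete bipartite graph K_{n,n} is k-removable (for the constant function f ≡ k), then k > n − √(2n(log n + 1)). -/

import Mathlib

open scoped Classical in
/-- `Removable G S f`: all vertices of `S` (the remaining vertices of `G`) can be deleted
by legal `DelSave` operations. Deleting `u` with save-set `W ⊆ N(u)` is legal if
`f u > ∑_{w ∈ W} f w` and afterwards every remaining vertex keeps a positive value;
each deleted vertex decreases `f` by one on its unsaved neighbors. -/
inductive Removable {V : Type*} [DecidableEq V] (G : SimpleGraph V) :
    Finset V → (V → ℕ) → Prop
  | empty (f : V → ℕ) : Removable G ∅ f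
  | step (S : Finset V) (f : V → ℕ) (u : V) (W : Finset V)
      (hu : u ∈ S)
      (hW : ∀ w ∈ W, w ∈ S.erase u ∧ G.Adj u w)
      (hlegal : ∑ w ∈ W, f w < f u)
      (hpos : ∀ v ∈ S.erase u, 1 ≤ (if G.Adj u v ∧ v ∉ W then f v - 1 else f v))
      (hrec : Removable G (S.erase u) (fun v => if G.Adj u v ∧ v ∉ W then f v - 1 else f v)) :
      Removable G S f

namespace Stmt9

/-- The capped quadratic `F`. -/
def FF (d a b : ℕ) : ℤ :=
  ((d : ℤ) + 1) ^ 2 -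
    (if a ≤ d + 1 ∨ b ≤ d + 1 then ((d : ℤ) + 1 - a) * ((d : ℤ) + 1 - b) else 0)

lemma FF_symm (d a b : ℕ) : FF d a b = FF d b a := by
  unfold FF
  by_cases h : a ≤ d + 1 ∨ b ≤ d + 1
  · rw [if_pos h, if_pos h.symm, mul_comm]
  · rw [if_neg h, if_neg (fun hc => h hc.symm)]

lemma FF_step (d : ℕ) {a : ℕ} (b : ℕ) (ha : 1 ≤ a) :
    FF d (a - 1) b - FF d a b =
      if a ≤ d + 1 ∨ b ≤ d + 1 then (b : ℤ) - d - 1 else 0 := by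
  have hcast : ((a - 1 : ℕ) : ℤ) = (a : ℤ) - 1 := by
    omega
  unfold FF
  by_cases h : a ≤ d + 1 ∨ b ≤ d + 1
  · have h' : a - 1 ≤ d + 1 ∨ b ≤ d + 1 := by omega
    rw [if_pos h, if_pos h', if_pos h, hcast]
    ring
  · push_neg at h
    have h2 : ¬ (a ≤ d + 1 ∨ b ≤ d + 1) := by omega
    rw [if_neg h2, if_neg h2]
    by_cases h3 : a - 1 ≤ d + 1
    · -- a - 1 = d + 1
      have : a = d + 2 := by omega
      rw [if_pos (Or.inl h3), hcast, this]
      push_cast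
      ring
    · rw [if_neg (by omega : ¬ (a - 1 ≤ d + 1 ∨ b ≤ d + 1))]
      ring

lemma FF_nn (d n : ℕ) (h : d + 1 ≤ n) : FF d n n = ((d : ℤ) + 1) ^ 2 := by
  unfold FF
  by_cases h2 : n ≤ d + 1
  · have : n = d + 1 := by omega
    subst this
    rw [if_pos (Or.inl le_rfl)]
    push_cast
    ring
  · rw [if_neg (by omega)]
    ring

lemma FF_zero (d : ℕ) : FF d 0 0 = 0 := by
  unfold FF
  rw [if_pos (Or.inl (by omega))]
  push_cast
  ring

/-- summand of the harmonic-type sum -/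
noncomputable def PSIf (d j : ℕ) : ℝ := if d + 2 ≤ j then ((j - d : ℕ) : ℝ)⁻¹ else 0

noncomputable def PSI (d x : ℕ) : ℝ := ∑ i ∈ Finset.range x, PSIf d (i + 1)

lemma PSIf_nonneg (d j : ℕ) : 0 ≤ PSIf d j := by
  unfold PSIf
  split
  · positivity
  · exact le_rfl

lemma PSI_succ (d x : ℕ) : PSI d (x + 1) = PSI d x + PSIf d (x + 1) :=
  Finset.sum_range_succ _ _

lemma PSI_nonneg (d x : ℕ) : 0 ≤ PSI d x :=
  Finset.sum_nonneg fun i _ => PSIf_nonneg d (i + 1)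

lemma logNat_mono {m m' : ℕ} (h : m ≤ m') : Real.log m ≤ Real.log m' := by
  rcases Nat.eq_zero_or_pos m with hm | hm
  · subst hm
    simp only [Nat.cast_zero, Real.log_zero]
    rcases Nat.eq_zero_or_pos m' with hm' | hm'
    · simp [hm']
    · exact Real.log_nonneg (by exact_mod_cast hm')
  · exact Real.log_le_log (by exact_mod_cast hm) (by exact_mod_cast h)

lemma PSI_le_log (d : ℕ) : ∀ x : ℕ, PSI d x ≤ Real.log ((x - d : ℕ) : ℝ) := by
  intro x
  induction x with
  | zero => simp [PSI, Real.log_zero]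
  | succ x ih =>
    rw [PSI_succ]
    unfold PSIf
    by_cases h : d + 2 ≤ x + 1
    · rw [if_pos h]
      have hm : 1 ≤ x - d := by omega
      have hsub : (x + 1 - d : ℕ) = (x - d) + 1 := by omega
      set m : ℕ := x - d with hmdef
      have key : ((m + 1 : ℕ) : ℝ)⁻¹ ≤ Real.log (m + 1 : ℕ) - Real.log m := by
        have hm0 : (0 : ℝ) < m := by exact_mod_cast hm
        have hm1 : (0 : ℝ) < ((m : ℝ) + 1) := by positivity
        have hx : (0 : ℝ) < (m : ℝ) / ((m : ℝ) + 1) := by positivity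
        have := Real.log_le_sub_one_of_pos hx
        rw [Real.log_div (ne_of_gt hm0) (ne_of_gt hm1)] at this
        have hcalc : (m : ℝ) / ((m : ℝ) + 1) - 1 = -(((m : ℝ) + 1))⁻¹ := by
          field_simp
          ring
        rw [hcalc] at this
        push_cast
        linarith
      rw [hsub]
      have := add_le_add ih key
      push_cast at this ⊢
      linarith
    · rw [if_neg h]
      rw [add_zero]
      exact ih.trans (logNat_mono (by omega))

/-- core integer inequality, cheap-phase case -/
lemma core1 (d fu sW cW b : ℤ) (hcW : cW ≤ sW) (hleg : sW ≤ fu - 1) :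
    0 ≤ (b - d - 1) + (fu + d - b) - cW := by linarith

/-- core integer inequality, expensive-phase case -/
lemma core2 (d k fu sW cW a b : ℤ) (hk : 1 ≤ k)
    (ha : d + 2 ≤ a) (hrn : b ≤ k + d)
    (hfu1 : 1 ≤ fu) (hfub : b ≤ fu + d)
    (hcW0 : 0 ≤ cW) (hfloor : cW * (a - d) ≤ sW) (hleg : sW ≤ fu - 1) :
    0 ≤ ((if b ≤ d + 1 then b - d - 1 else 0) + (fu + d - b) - cW) * (a - d) + (k - 1) := by
  have had : (2 : ℤ) ≤ a - d := by linarith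
  by_cases hb : b ≤ d + 1
  · rw [if_pos hb]
    have h1 : cW * (a - d) ≤ fu - 1 := le_trans hfloor hleg
    have h2 : 0 ≤ fu - 1 - cW * 1 := by nlinarith
    have key : 0 ≤ (fu - 1 - cW) * (a - d) := by nlinarith
    nlinarith
  · rw [if_neg hb]
    push_neg at hb
    have hsu : 0 ≤ fu + d - b := by linarith
    nlinarith [mul_nonneg hsu (by linarith : (0:ℤ) ≤ a - d - 1)]

-- ============ state-level definitions
variable {n : ℕ}

def lc (S : Finset (Fin n ⊕ Fin n)) : ℕ := S.toLeft.card
def rc (S : Finset (Fin n ⊕ Fin n)) : ℕ := S.toRight.card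

def oppc (S : Finset (Fin n ⊕ Fin n)) : Fin n ⊕ Fin n → ℕ :=
  Sum.elim (fun _ => rc S) (fun _ => lc S)

def TT (d : ℕ) (S : Finset (Fin n ⊕ Fin n)) (f : Fin n ⊕ Fin n → ℕ) : ℤ :=
  ∑ v ∈ S, ((f v : ℤ) + d - oppc S v)

noncomputable def PHI (k d : ℕ) (S : Finset (Fin n ⊕ Fin n)) (f : Fin n ⊕ Fin n → ℕ) : ℝ :=
  (FF d (lc S) (rc S) : ℝ) - (TT d S f : ℝ) -
    ((k : ℝ) - 1) * (PSI d (lc S) + PSI d (rc S))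

def INV (d : ℕ) (S : Finset (Fin n ⊕ Fin n)) (f : Fin n ⊕ Fin n → ℕ) : Prop :=
  ∀ v ∈ S, 1 ≤ f v ∧ oppc S v ≤ f v + d

-- ============ counting lemmas
lemma toLeft_erase_inl (S : Finset (Fin n ⊕ Fin n)) (a : Fin n) :
    (S.erase (Sum.inl a)).toLeft = S.toLeft.erase a := by
  ext c; simp [Finset.mem_erase]

lemma toRight_erase_inl (S : Finset (Fin n ⊕ Fin n)) (a : Fin n) :
    (S.erase (Sum.inl a)).toRight = S.toRight := by
  ext c; simp [Finset.mem_erase]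

lemma toRight_erase_inr (S : Finset (Fin n ⊕ Fin n)) (a : Fin n) :
    (S.erase (Sum.inr a)).toRight = S.toRight.erase a := by
  ext c; simp [Finset.mem_erase]

lemma toLeft_erase_inr (S : Finset (Fin n ⊕ Fin n)) (a : Fin n) :
    (S.erase (Sum.inr a)).toLeft = S.toLeft := by
  ext c; simp [Finset.mem_erase]

lemma lc_erase_inl {S : Finset (Fin n ⊕ Fin n)} {a : Fin n} (h : Sum.inl a ∈ S) :
    lc (S.erase (Sum.inl a)) = lc S - 1 := by
  unfold lc
  rw [toLeft_erase_inl, Finset.card_erase_of_mem (by simpa using h)]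

lemma rc_erase_inl (S : Finset (Fin n ⊕ Fin n)) (a : Fin n) :
    rc (S.erase (Sum.inl a)) = rc S := by
  unfold rc; rw [toRight_erase_inl]

lemma rc_erase_inr {S : Finset (Fin n ⊕ Fin n)} {a : Fin n} (h : Sum.inr a ∈ S) :
    rc (S.erase (Sum.inr a)) = rc S - 1 := by
  unfold rc
  rw [toRight_erase_inr, Finset.card_erase_of_mem (by simpa using h)]

lemma lc_erase_inr (S : Finset (Fin n ⊕ Fin n)) (a : Fin n) :
    lc (S.erase (Sum.inr a)) = lc S := by
  unfold lc; rw [toLeft_erase_inr]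

lemma lc_pos_of_inl {S : Finset (Fin n ⊕ Fin n)} {a : Fin n} (h : Sum.inl a ∈ S) :
    1 ≤ lc S :=
  Finset.card_pos.mpr ⟨a, by simpa using h⟩

lemma rc_pos_of_inr {S : Finset (Fin n ⊕ Fin n)} {a : Fin n} (h : Sum.inr a ∈ S) :
    1 ≤ rc S :=
  Finset.card_pos.mpr ⟨a, by simpa using h⟩

lemma lc_le (S : Finset (Fin n ⊕ Fin n)) : lc S ≤ n := by
  simpa [lc] using (Finset.card_le_univ S.toLeft)

lemma rc_le (S : Finset (Fin n ⊕ Fin n)) : rc S ≤ n := by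
  simpa [rc] using (Finset.card_le_univ S.toRight)

lemma lc_univ : lc (Finset.univ : Finset (Fin n ⊕ Fin n)) = n := by
  unfold lc
  have : (Finset.univ : Finset (Fin n ⊕ Fin n)).toLeft = Finset.univ := by
    ext c; simp
  rw [this]; simp

lemma rc_univ : rc (Finset.univ : Finset (Fin n ⊕ Fin n)) = n := by
  unfold rc
  have : (Finset.univ : Finset (Fin n ⊕ Fin n)).toRight = Finset.univ := by
    ext c; simp
  rw [this]; simp



lemma core2' (d k : ℕ) (fu sW cW : ℤ) (a b : ℕ) (hk : 1 ≤ k)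
    (ha : d + 2 ≤ a) (hrn : b ≤ k + d)
    (hfu1 : 1 ≤ fu) (hfub : (b : ℤ) ≤ fu + d)
    (hcW0 : 0 ≤ cW) (hfloor : cW * ((a : ℤ) - d) ≤ sW) (hleg : sW ≤ fu - 1) :
    0 ≤ ((if b ≤ d + 1 then (b : ℤ) - d - 1 else 0) + (fu + d - b) - cW) * ((a : ℤ) - d)
        + ((k : ℤ) - 1) := by
  have haZ : (d : ℤ) + 2 ≤ (a : ℤ) := by exact_mod_cast ha
  have had : (2 : ℤ) ≤ (a : ℤ) - d := by linarith
  have hkZ : (1 : ℤ) ≤ (k : ℤ) := by exact_mod_cast hk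
  by_cases hb : b ≤ d + 1
  · rw [if_pos hb]
    have h1 : cW * ((a : ℤ) - d) ≤ fu - 1 := le_trans hfloor hleg
    have key : 0 ≤ (fu - 1 - cW) * ((a : ℤ) - d) := by nlinarith
    nlinarith
  · rw [if_neg hb]
    push_neg at hb
    have hbZ : (d : ℤ) + 1 < (b : ℤ) := by exact_mod_cast hb
    have hbn : (b : ℤ) ≤ (k : ℤ) + d := by exact_mod_cast hrn
    have hsu : 0 ≤ fu + d - b := by linarith
    nlinarith [mul_nonneg hsu (by linarith : (0:ℤ) ≤ (a:ℤ) - d - 1), hfloor, hleg]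

/-- the combined per-move inequality; deleter side has `a` vertices (incl. deleter),
other side has `b` vertices. -/
lemma step_core (k d a b : ℕ) (fu sW cW : ℤ) (hk : 1 ≤ k)
    (ha : 1 ≤ a) (hbn : b ≤ k + d)
    (hfu1 : 1 ≤ fu) (hfub : (b : ℤ) ≤ fu + d)
    (hcW0 : 0 ≤ cW) (hcW1 : cW ≤ sW)
    (hfloor : cW * ((a : ℤ) - d) ≤ sW) (hleg : sW ≤ fu - 1) :
    (cW : ℝ) - ((fu + (d : ℤ) - b : ℤ) : ℝ) ≤
      ((FF d (a - 1) b - FF d a b : ℤ) : ℝ) + ((k : ℝ) - 1) * PSIf d a := by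
  rw [FF_step d b ha]
  by_cases had : a ≤ d + 1
  · have hψ : PSIf d a = 0 := if_neg (by omega)
    rw [hψ, mul_zero, add_zero, if_pos (Or.inl had)]
    have hZ : cW - (fu + (d : ℤ) - b) ≤ (b : ℤ) - d - 1 := by linarith
    exact_mod_cast hZ
  · push_neg at had
    have had' : d + 2 ≤ a := had
    have hψ : PSIf d a = ((a - d : ℕ) : ℝ)⁻¹ := if_pos (by omega)
    have hite : (if a ≤ d + 1 ∨ b ≤ d + 1 then (b : ℤ) - d - 1 else 0) =
        (if b ≤ d + 1 then (b : ℤ) - d - 1 else 0) := by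
      by_cases hb : b ≤ d + 1
      · rw [if_pos (Or.inr hb), if_pos hb]
      · rw [if_neg (by omega), if_neg hb]
    rw [hite, hψ]
    set A : ℤ := if b ≤ d + 1 then (b : ℤ) - d - 1 else 0 with hA
    have hZ := core2' d k fu sW cW a b hk had' hbn hfu1 hfub hcW0 hfloor hleg
    rw [← hA] at hZ
    have hposN : (0 : ℝ) < ((a - d : ℕ) : ℝ) := by
      have h1 : 1 ≤ a - d := by omega
      exact_mod_cast h1
    have hcastad : ((a - d : ℕ) : ℝ) = (a : ℝ) - d := by
      have hda : d ≤ a := by omega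
      push_cast [hda]
      ring
    rw [hcastad] at hposN hψ ⊢
    have hXR : (0 : ℝ) ≤ ((A : ℝ) + ((fu : ℝ) + d - b) - cW) * ((a : ℝ) - d)
        + ((k : ℝ) - 1) := by
      exact_mod_cast hZ
    have hne : ((a : ℝ) - d) ≠ 0 := ne_of_gt hposN
    have expand : (((A : ℝ) + ((fu : ℝ) + d - b) - cW) + ((k : ℝ) - 1) * ((a : ℝ) - d)⁻¹)
        * ((a : ℝ) - d)
        = ((A : ℝ) + ((fu : ℝ) + d - b) - cW) * ((a : ℝ) - d) + ((k : ℝ) - 1) := by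
      field_simp
    have hmain : (0 : ℝ) ≤ ((A : ℝ) + ((fu : ℝ) + d - b) - cW)
        + ((k : ℝ) - 1) * ((a : ℝ) - d)⁻¹ := by
      have := (mul_nonneg_iff_of_pos_right hposN).mp (by rw [expand]; exact hXR)
      exact this
    have hgoalcast : ((fu + (d : ℤ) - b : ℤ) : ℝ) = (fu : ℝ) + d - b := by push_cast; ring
    rw [hgoalcast]
    linarith



open Finset in
lemma step_left {n : ℕ} (k d : ℕ) (hk : 1 ≤ k) (hn : n = k + d)
    (S : Finset (Fin n ⊕ Fin n)) (f f' : Fin n ⊕ Fin n → ℕ) (a : Fin n)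
    (hu : Sum.inl a ∈ S) (W : Finset (Fin n ⊕ Fin n))
    (hWS : ∀ w ∈ W, w ∈ S.erase (Sum.inl a))
    (hWR : ∀ w ∈ W, w.isRight)
    (hlegal : ∑ w ∈ W, f w < f (Sum.inl a))
    (hf'W : ∀ v ∈ W, f' v = f v)
    (hf'L : ∀ c : Fin n, f' (Sum.inl c) = f (Sum.inl c))
    (hf'R : ∀ c : Fin n, Sum.inr c ∉ W → f' (Sum.inr c) = f (Sum.inr c) - 1)
    (hpos : ∀ v ∈ S.erase (Sum.inl a), 1 ≤ f' v)
    (hinv : INV d S f) :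
    INV d (S.erase (Sum.inl a)) f' ∧ PHI k d S f ≤ PHI k d (S.erase (Sum.inl a)) f' := by
  have hl1 : 1 ≤ lc S := lc_pos_of_inl hu
  have hlc' : lc (S.erase (Sum.inl a)) = lc S - 1 := lc_erase_inl hu
  have hrc' : rc (S.erase (Sum.inl a)) = rc S := rc_erase_inl S a
  have hWnotL : ∀ c : Fin n, Sum.inl c ∉ W := by
    intro c hc
    simpa using hWR _ hc
  constructor
  · -- INV propagation
    intro v hv
    refine ⟨hpos v hv, ?_⟩
    have hvS : v ∈ S := Finset.mem_of_mem_erase hv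
    obtain ⟨hf1, hf2⟩ := hinv v hvS
    match v with
    | Sum.inl c =>
      rw [hf'L]
      simp only [oppc, Sum.elim_inl] at hf2 ⊢
      rw [hrc']
      exact hf2
    | Sum.inr c =>
      simp only [oppc, Sum.elim_inr] at hf2 ⊢
      rw [hlc']
      by_cases hw : Sum.inr c ∈ W
      · rw [hf'W _ hw]; omega
      · rw [hf'R c hw]
        have h1 : 1 ≤ f' (Sum.inr c) := hpos _ hv
        rw [hf'R c hw] at h1
        omega
  · -- PHI inequality
    set S' := S.erase (Sum.inl a) with hS'
    -- T difference
    have hptw : ∀ v ∈ S', ((f v : ℤ) + d - oppc S v) =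
        ((f' v : ℤ) + d - oppc S' v) + (if v ∈ W then (-1 : ℤ) else 0) := by
      intro v hv
      have hvS : v ∈ S := Finset.mem_of_mem_erase hv
      match v with
      | Sum.inl c =>
        rw [if_neg (hWnotL c), hf'L]
        simp only [oppc, Sum.elim_inl, hrc']
        ring
      | Sum.inr c =>
        simp only [oppc, Sum.elim_inr, hlc']
        have hcast : ((lc S - 1 : ℕ) : ℤ) = (lc S : ℤ) - 1 := by omega
        by_cases hw : Sum.inr c ∈ W
        · rw [if_pos hw, hf'W _ hw, hcast]
          ring
        · rw [if_neg hw, hf'R c hw]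
          have hf1 : 1 ≤ f (Sum.inr c) := (hinv _ hvS).1
          have hcast2 : ((f (Sum.inr c) - 1 : ℕ) : ℤ) = (f (Sum.inr c) : ℤ) - 1 := by omega
          rw [hcast2, hcast]
          ring
    have hTsplit : TT d S f = ((f (Sum.inl a) : ℤ) + d - rc S) +
        ∑ v ∈ S', ((f v : ℤ) + d - oppc S v) := by
      unfold TT
      rw [← Finset.add_sum_erase S _ hu]
      simp only [oppc, Sum.elim_inl]
      rfl
    have hTsum : ∑ v ∈ S', ((f v : ℤ) + d - oppc S v) = TT d S' f' - W.card := by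
      rw [Finset.sum_congr rfl hptw, Finset.sum_add_distrib]
      unfold TT
      congr 1
      rw [Finset.sum_ite_mem]
      have hWint : S' ∩ W = W := Finset.inter_eq_right.mpr (fun w hw => hWS w hw)
      rw [hWint, Finset.sum_const]
      simp
    have hT : TT d S f = ((f (Sum.inl a) : ℤ) + d - rc S) + TT d S' f' - W.card := by
      rw [hTsplit, hTsum]; ring
    -- bounds for step_core
    have hinvW : ∀ w ∈ W, 1 ≤ f w ∧ (lc S : ℤ) ≤ (f w : ℤ) + d := by
      intro w hw
      have hwS : w ∈ S := Finset.mem_of_mem_erase (hWS w hw)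
      obtain ⟨h1, h2⟩ := hinv w hwS
      refine ⟨h1, ?_⟩
      match w with
      | Sum.inl c => exact absurd hw (hWnotL c)
      | Sum.inr c =>
        simp only [oppc, Sum.elim_inr] at h2
        exact_mod_cast h2
    have hcW1 : (W.card : ℤ) ≤ ∑ w ∈ W, (f w : ℤ) := by
      rw [Finset.card_eq_sum_ones]
      push_cast
      exact Finset.sum_le_sum (fun w hw => by exact_mod_cast (hinvW w hw).1)
    have hfloor : (W.card : ℤ) * ((lc S : ℤ) - d) ≤ ∑ w ∈ W, (f w : ℤ) := by
      calc (W.card : ℤ) * ((lc S : ℤ) - d) = ∑ _w ∈ W, ((lc S : ℤ) - d) := by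
            rw [Finset.sum_const, nsmul_eq_mul]
        _ ≤ ∑ w ∈ W, (f w : ℤ) := Finset.sum_le_sum (fun w hw => by
            have := (hinvW w hw).2; linarith)
    have hleg : ∑ w ∈ W, (f w : ℤ) ≤ (f (Sum.inl a) : ℤ) - 1 := by
      have : (∑ w ∈ W, f w : ℕ) < f (Sum.inl a) := hlegal
      have h2 : ((∑ w ∈ W, f w : ℕ) : ℤ) < (f (Sum.inl a) : ℤ) := by exact_mod_cast this
      push_cast at h2
      linarith
    obtain ⟨hfu1, hfu2⟩ := hinv _ hu
    simp only [oppc, Sum.elim_inl] at hfu2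
    have hcore := step_core k d (lc S) (rc S) (f (Sum.inl a)) (∑ w ∈ W, (f w : ℤ))
      (W.card) hk hl1 (by rw [← hn]; exact rc_le S)
      (by exact_mod_cast hfu1) (by exact_mod_cast hfu2)
      (by positivity) hcW1 hfloor hleg
    -- PSI difference
    have hPSI : PSI d (lc S) = PSI d (lc S - 1) + PSIf d (lc S) := by
      have h1 : lc S - 1 + 1 = lc S := by omega
      have := PSI_succ d (lc S - 1)
      rw [h1] at this
      exact this
    -- assemble
    unfold PHI
    rw [hlc', hrc', hT, hPSI]
    have hFF : ((FF d (lc S - 1) (rc S) - FF d (lc S) (rc S) : ℤ) : ℝ)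
        = (FF d (lc S - 1) (rc S) : ℝ) - (FF d (lc S) (rc S) : ℝ) := by push_cast; ring
    rw [hFF] at hcore
    push_cast
    push_cast at hcore
    linarith

open Finset in
lemma step_right {n : ℕ} (k d : ℕ) (hk : 1 ≤ k) (hn : n = k + d)
    (S : Finset (Fin n ⊕ Fin n)) (f f' : Fin n ⊕ Fin n → ℕ) (a : Fin n)
    (hu : Sum.inr a ∈ S) (W : Finset (Fin n ⊕ Fin n))
    (hWS : ∀ w ∈ W, w ∈ S.erase (Sum.inr a))
    (hWL : ∀ w ∈ W, w.isLeft)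
    (hlegal : ∑ w ∈ W, f w < f (Sum.inr a))
    (hf'W : ∀ v ∈ W, f' v = f v)
    (hf'R : ∀ c : Fin n, f' (Sum.inr c) = f (Sum.inr c))
    (hf'L : ∀ c : Fin n, Sum.inl c ∉ W → f' (Sum.inl c) = f (Sum.inl c) - 1)
    (hpos : ∀ v ∈ S.erase (Sum.inr a), 1 ≤ f' v)
    (hinv : INV d S f) :
    INV d (S.erase (Sum.inr a)) f' ∧ PHI k d S f ≤ PHI k d (S.erase (Sum.inr a)) f' := by
  have hr1 : 1 ≤ rc S := rc_pos_of_inr hu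
  have hrc' : rc (S.erase (Sum.inr a)) = rc S - 1 := rc_erase_inr hu
  have hlc' : lc (S.erase (Sum.inr a)) = lc S := lc_erase_inr S a
  have hWnotR : ∀ c : Fin n, Sum.inr c ∉ W := by
    intro c hc
    simpa using hWL _ hc
  constructor
  · intro v hv
    refine ⟨hpos v hv, ?_⟩
    have hvS : v ∈ S := Finset.mem_of_mem_erase hv
    obtain ⟨hf1, hf2⟩ := hinv v hvS
    match v with
    | Sum.inr c =>
      rw [hf'R]
      simp only [oppc, Sum.elim_inr] at hf2 ⊢
      rw [hlc']
      exact hf2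
    | Sum.inl c =>
      simp only [oppc, Sum.elim_inl] at hf2 ⊢
      rw [hrc']
      by_cases hw : Sum.inl c ∈ W
      · rw [hf'W _ hw]; omega
      · rw [hf'L c hw]
        have h1 : 1 ≤ f' (Sum.inl c) := hpos _ hv
        rw [hf'L c hw] at h1
        omega
  · set S' := S.erase (Sum.inr a) with hS'
    have hptw : ∀ v ∈ S', ((f v : ℤ) + d - oppc S v) =
        ((f' v : ℤ) + d - oppc S' v) + (if v ∈ W then (-1 : ℤ) else 0) := by
      intro v hv
      have hvS : v ∈ S := Finset.mem_of_mem_erase hv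
      match v with
      | Sum.inr c =>
        rw [if_neg (hWnotR c), hf'R]
        simp only [oppc, Sum.elim_inr, hlc']
        ring
      | Sum.inl c =>
        simp only [oppc, Sum.elim_inl, hrc']
        have hcast : ((rc S - 1 : ℕ) : ℤ) = (rc S : ℤ) - 1 := by omega
        by_cases hw : Sum.inl c ∈ W
        · rw [if_pos hw, hf'W _ hw, hcast]
          ring
        · rw [if_neg hw, hf'L c hw]
          have hf1 : 1 ≤ f (Sum.inl c) := (hinv _ hvS).1
          have hcast2 : ((f (Sum.inl c) - 1 : ℕ) : ℤ) = (f (Sum.inl c) : ℤ) - 1 := by omega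
          rw [hcast2, hcast]
          ring
    have hTsplit : TT d S f = ((f (Sum.inr a) : ℤ) + d - lc S) +
        ∑ v ∈ S', ((f v : ℤ) + d - oppc S v) := by
      unfold TT
      rw [← Finset.add_sum_erase S _ hu]
      simp only [oppc, Sum.elim_inr]
      rfl
    have hTsum : ∑ v ∈ S', ((f v : ℤ) + d - oppc S v) = TT d S' f' - W.card := by
      rw [Finset.sum_congr rfl hptw, Finset.sum_add_distrib]
      unfold TT
      congr 1
      rw [Finset.sum_ite_mem]
      have hWint : S' ∩ W = W := Finset.inter_eq_right.mpr (fun w hw => hWS w hw)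
      rw [hWint, Finset.sum_const]
      simp
    have hT : TT d S f = ((f (Sum.inr a) : ℤ) + d - lc S) + TT d S' f' - W.card := by
      rw [hTsplit, hTsum]; ring
    have hinvW : ∀ w ∈ W, 1 ≤ f w ∧ (rc S : ℤ) ≤ (f w : ℤ) + d := by
      intro w hw
      have hwS : w ∈ S := Finset.mem_of_mem_erase (hWS w hw)
      obtain ⟨h1, h2⟩ := hinv w hwS
      refine ⟨h1, ?_⟩
      match w with
      | Sum.inr c => exact absurd hw (hWnotR c)
      | Sum.inl c =>
        simp only [oppc, Sum.elim_inl] at h2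
        exact_mod_cast h2
    have hcW1 : (W.card : ℤ) ≤ ∑ w ∈ W, (f w : ℤ) := by
      rw [Finset.card_eq_sum_ones]
      push_cast
      exact Finset.sum_le_sum (fun w hw => by exact_mod_cast (hinvW w hw).1)
    have hfloor : (W.card : ℤ) * ((rc S : ℤ) - d) ≤ ∑ w ∈ W, (f w : ℤ) := by
      calc (W.card : ℤ) * ((rc S : ℤ) - d) = ∑ _w ∈ W, ((rc S : ℤ) - d) := by
            rw [Finset.sum_const, nsmul_eq_mul]
        _ ≤ ∑ w ∈ W, (f w : ℤ) := Finset.sum_le_sum (fun w hw => by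
            have := (hinvW w hw).2; linarith)
    have hleg : ∑ w ∈ W, (f w : ℤ) ≤ (f (Sum.inr a) : ℤ) - 1 := by
      have : (∑ w ∈ W, f w : ℕ) < f (Sum.inr a) := hlegal
      have h2 : ((∑ w ∈ W, f w : ℕ) : ℤ) < (f (Sum.inr a) : ℤ) := by exact_mod_cast this
      push_cast at h2
      linarith
    obtain ⟨hfu1, hfu2⟩ := hinv _ hu
    simp only [oppc, Sum.elim_inr] at hfu2
    have hcore := step_core k d (rc S) (lc S) (f (Sum.inr a)) (∑ w ∈ W, (f w : ℤ))
      (W.card) hk hr1 (by rw [← hn]; exact lc_le S)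
      (by exact_mod_cast hfu1) (by exact_mod_cast hfu2)
      (by positivity) hcW1 hfloor hleg
    have hPSI : PSI d (rc S) = PSI d (rc S - 1) + PSIf d (rc S) := by
      have h1 : rc S - 1 + 1 = rc S := by omega
      have := PSI_succ d (rc S - 1)
      rw [h1] at this
      exact this
    unfold PHI
    rw [hlc', hrc', hT, hPSI]
    have hFFs1 : FF d (lc S) (rc S - 1) = FF d (rc S - 1) (lc S) := FF_symm d _ _
    have hFFs2 : FF d (lc S) (rc S) = FF d (rc S) (lc S) := FF_symm d _ _
    rw [hFFs1, hFFs2]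
    have hFF : ((FF d (rc S - 1) (lc S) - FF d (rc S) (lc S) : ℤ) : ℝ)
        = (FF d (rc S - 1) (lc S) : ℝ) - (FF d (rc S) (lc S) : ℝ) := by push_cast; ring
    rw [hFF] at hcore
    push_cast
    push_cast at hcore
    linarith

lemma main {n : ℕ} (k d : ℕ) (hk : 1 ≤ k) (hn : n = k + d)
    (S : Finset (Fin n ⊕ Fin n)) (f : Fin n ⊕ Fin n → ℕ)
    (h : Removable (completeBipartiteGraph (Fin n) (Fin n)) S f) :
    INV d S f → PHI k d S f ≤ 0 := by
  classical
  induction h with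
  | empty f =>
    intro _
    unfold PHI
    have h1 : lc (∅ : Finset (Fin n ⊕ Fin n)) = 0 := by
      unfold lc
      have : (∅ : Finset (Fin n ⊕ Fin n)).toLeft = ∅ := by ext c; simp
      rw [this]; simp
    have h2 : rc (∅ : Finset (Fin n ⊕ Fin n)) = 0 := by
      unfold rc
      have : (∅ : Finset (Fin n ⊕ Fin n)).toRight = ∅ := by ext c; simp
      rw [this]; simp
    have h3 : TT d (∅ : Finset (Fin n ⊕ Fin n)) f = 0 := by simp [TT]
    have h4 : PSI d 0 = 0 := by simp [PSI]
    rw [h1, h2, h3, h4, FF_zero]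
    norm_num
  | step S f u W hu hW hlegal hpos hrec ih =>
    intro hinv
    match u with
    | Sum.inl a =>
      have hWR : ∀ w ∈ W, w.isRight := by
        intro w hw
        have := (hW w hw).2
        simp only [completeBipartiteGraph_adj] at this
        rcases this with ⟨_, h2⟩ | ⟨h1, _⟩
        · exact h2
        · simp at h1
      have hWS : ∀ w ∈ W, w ∈ S.erase (Sum.inl a) := fun w hw => (hW w hw).1
      have hf'W : ∀ v ∈ W,
          (if (completeBipartiteGraph (Fin n) (Fin n)).Adj (Sum.inl a) v ∧ v ∉ W
            then f v - 1 else f v) = f v := by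
        intro v hv
        rw [if_neg (fun hc => hc.2 hv)]
      have hf'L : ∀ c : Fin n,
          (if (completeBipartiteGraph (Fin n) (Fin n)).Adj (Sum.inl a) (Sum.inl c)
              ∧ Sum.inl c ∉ W
            then f (Sum.inl c) - 1 else f (Sum.inl c)) = f (Sum.inl c) := by
        intro c
        rw [if_neg (fun hc => by simpa using hc.1)]
      have hf'R : ∀ c : Fin n, Sum.inr c ∉ W →
          (if (completeBipartiteGraph (Fin n) (Fin n)).Adj (Sum.inl a) (Sum.inr c)
              ∧ Sum.inr c ∉ W
            then f (Sum.inr c) - 1 else f (Sum.inr c)) = f (Sum.inr c) - 1 := by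
        intro c hc
        rw [if_pos ⟨by simp, hc⟩]
      obtain ⟨hinv', hphi⟩ := step_left k d hk hn S f _ a hu W hWS hWR hlegal
        hf'W hf'L hf'R hpos hinv
      exact le_trans hphi (ih hinv')
    | Sum.inr a =>
      have hWL : ∀ w ∈ W, w.isLeft := by
        intro w hw
        have := (hW w hw).2
        simp only [completeBipartiteGraph_adj] at this
        rcases this with ⟨h1, _⟩ | ⟨_, h2⟩
        · simp at h1
        · exact h2
      have hWS : ∀ w ∈ W, w ∈ S.erase (Sum.inr a) := fun w hw => (hW w hw).1
      have hf'W : ∀ v ∈ W,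
          (if (completeBipartiteGraph (Fin n) (Fin n)).Adj (Sum.inr a) v ∧ v ∉ W
            then f v - 1 else f v) = f v := by
        intro v hv
        rw [if_neg (fun hc => hc.2 hv)]
      have hf'R : ∀ c : Fin n,
          (if (completeBipartiteGraph (Fin n) (Fin n)).Adj (Sum.inr a) (Sum.inr c)
              ∧ Sum.inr c ∉ W
            then f (Sum.inr c) - 1 else f (Sum.inr c)) = f (Sum.inr c) := by
        intro c
        rw [if_neg (fun hc => by simpa using hc.1)]
      have hf'L : ∀ c : Fin n, Sum.inl c ∉ W →
          (if (completeBipartiteGraph (Fin n) (Fin n)).Adj (Sum.inr a) (Sum.inl c)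
              ∧ Sum.inl c ∉ W
            then f (Sum.inl c) - 1 else f (Sum.inl c)) = f (Sum.inl c) - 1 := by
        intro c hc
        rw [if_pos ⟨by simp, hc⟩]
      obtain ⟨hinv', hphi⟩ := step_right k d hk hn S f _ a hu W hWS hWL hlegal
        hf'W hf'R hf'L hpos hinv
      exact le_trans hphi (ih hinv')

lemma initial (n k d : ℕ) (hk : 1 ≤ k) (hn : n = k + d)
    (h : Removable (completeBipartiteGraph (Fin n) (Fin n)) Finset.univ (fun _ => k)) :
    ((d : ℝ) + 1) ^ 2 ≤ 2 * ((k : ℝ) - 1) * PSI d n := by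
  have hinv : INV d (Finset.univ : Finset (Fin n ⊕ Fin n)) (fun _ => k) := by
    intro v _
    refine ⟨hk, ?_⟩
    match v with
    | Sum.inl c => simp only [oppc, Sum.elim_inl, rc_univ]; omega
    | Sum.inr c => simp only [oppc, Sum.elim_inr, lc_univ]; omega
  have hmain := main k d hk hn Finset.univ (fun _ => k) h hinv
  unfold PHI at hmain
  rw [lc_univ, rc_univ] at hmain
  have hTT : TT d (Finset.univ : Finset (Fin n ⊕ Fin n)) (fun _ => k) = 0 := by
    unfold TT
    apply Finset.sum_eq_zero
    intro v _
    match v with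
    | Sum.inl c => simp only [oppc, Sum.elim_inl, rc_univ]; omega
    | Sum.inr c => simp only [oppc, Sum.elim_inr, lc_univ]; omega
  have hFF : FF d n n = ((d : ℤ) + 1) ^ 2 := FF_nn d n (by omega)
  rw [hTT, hFF] at hmain
  push_cast at hmain
  linarith

lemma no_zero {V : Type*} [DecidableEq V] {G : SimpleGraph V} {S : Finset V}
    {f : V → ℕ} (h : Removable G S f) (hS : S.Nonempty) (hf : ∀ v, f v = 0) :
    False := by
  cases h with
  | empty f => exact hS.ne_empty rfl
  | step S f u W hu hW hlegal hpos hrec =>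
    rw [hf u] at hlegal
    omega

end Stmt9

open Stmt9

/-- For `n ≥ 1`, if the complete bipartite graph `K_{n,n}` is
`k`-removable, then `k > n - √(2n(log n + 1))`. -/
theorem statement9 (n k : ℕ) (hn : 1 ≤ n)
    (h : Removable (completeBipartiteGraph (Fin n) (Fin n))
      Finset.univ (fun _ => k)) :
    (n : ℝ) - Real.sqrt (2 * n * (Real.log n + 1)) < k := by
  have hnR : (1 : ℝ) ≤ (n : ℝ) := by exact_mod_cast hn
  have hlogn : (0 : ℝ) ≤ Real.log n := Real.log_nonneg hnR
  have hY : (0 : ℝ) < 2 * (n : ℝ) * (Real.log n + 1) := by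
    have : (0:ℝ) < (n:ℝ) := by linarith
    nlinarith
  by_cases hkn : k ≤ n
  swap
  · push_neg at hkn
    have h1 : (n : ℝ) < k := by exact_mod_cast hkn
    have h2 : 0 < Real.sqrt (2 * n * (Real.log n + 1)) := Real.sqrt_pos.mpr hY
    linarith
  rcases Nat.eq_zero_or_pos k with hk0 | hk1
  · exfalso
    subst hk0
    have hne : (Finset.univ : Finset (Fin n ⊕ Fin n)).Nonempty :=
      ⟨Sum.inl ⟨0, hn⟩, Finset.mem_univ _⟩
    exact no_zero h hne (fun _ => rfl)
  · set d : ℕ := n - k with hd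
    have hn' : n = k + d := by omega
    have hmain := initial n k d hk1 hn' h
    have hPSIk : PSI d n ≤ Real.log k := by
      have := PSI_le_log d n
      have hnd : n - d = k := by omega
      rwa [hnd] at this
    have hk1R : (1 : ℝ) ≤ (k : ℝ) := by exact_mod_cast hk1
    have hknR : (k : ℝ) ≤ (n : ℝ) := by exact_mod_cast hkn
    have hlogk0 : 0 ≤ Real.log k := Real.log_nonneg hk1R
    have hlogkn : Real.log k ≤ Real.log n := logNat_mono hkn
    have hchain : ((d : ℝ) + 1) ^ 2 ≤ 2 * ((n : ℝ) - 1) * Real.log n := by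
      calc ((d : ℝ) + 1) ^ 2 ≤ 2 * ((k : ℝ) - 1) * PSI d n := hmain
        _ ≤ 2 * ((k : ℝ) - 1) * Real.log k := by nlinarith [PSI_nonneg d n]
        _ ≤ 2 * ((n : ℝ) - 1) * Real.log n := by nlinarith
    have hlt : ((d : ℝ)) ^ 2 < 2 * (n : ℝ) * (Real.log n + 1) := by
      have hd0 : (0 : ℝ) ≤ (d : ℝ) := Nat.cast_nonneg d
      nlinarith
    have hsq : (d : ℝ) < Real.sqrt (2 * n * (Real.log n + 1)) :=
      (Real.lt_sqrt (Nat.cast_nonneg d)).mpr hlt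
    have hcast : ((d : ℕ) : ℝ) = (n : ℝ) - k := by
      rw [hd]
      push_cast [hkn]
      ring
    linarith [hcast ▸ hsq]
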